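/- (q-stuffle in depth one) For 0 < q < 1 and integers i, j ≥ 2, ζ_q(i) ζ_q(j) = ζ_q(i,j) + ζ_q(j,i) + ζ_q(i+j) + (1-q) ζ_q(i+j-1). -/

import Mathlib

open scoped BigOperators

/-- The q-integer [m] = (1-q^m)/(1-q). -/
noncomputable def qint (q : ℝ) (m : ℕ) : ℝ := (1 - q ^ m) / (1 - q)

/-- Depth-one q-zeta value ζ_q(k) = Σ_{m≥1} q^{(k-1)m}/[m]^k. -/
noncomputable def zetaQ (q : ℝ) (k : ℕ) : ℝ :=
  ∑' m : ℕ, q ^ ((k - 1) * (m + 1)) / (qint q (m + 1)) ^ k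

/-- Depth-two qMZV: sum over m₁ > m₂ ≥ 1, parametrized by m₂ = p.2+1, m₁ = p.2+p.1+2. -/
noncomputable def zetaQ2 (q : ℝ) (k₁ k₂ : ℕ) : ℝ :=
  ∑' p : ℕ × ℕ,
    q ^ ((k₁ - 1) * (p.2 + p.1 + 2) + (k₂ - 1) * (p.2 + 1)) /
      ((qint q (p.2 + p.1 + 2)) ^ k₁ * (qint q (p.2 + 1)) ^ k₂)

/-- Depth-two qMZSV: sum over m₁ ≥ m₂ ≥ 1, parametrized by m₂ = p.2+1, m₁ = p.2+p.1+1. -/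
noncomputable def zetaQStar2 (q : ℝ) (k₁ k₂ : ℕ) : ℝ :=
  ∑' p : ℕ × ℕ,
    q ^ ((k₁ - 1) * (p.2 + p.1 + 1) + (k₂ - 1) * (p.2 + 1)) /
      ((qint q (p.2 + p.1 + 1)) ^ k₁ * (qint q (p.2 + 1)) ^ k₂)

/-- Interpolated q-double zeta value. -/
noncomputable def zetaQT (q t : ℝ) (k₁ k₂ : ℕ) : ℝ :=
  zetaQ2 q k₁ k₂ + t * (zetaQ q (k₁ + k₂) + (1 - q) * zetaQ q (k₁ + k₂ - 1))

section Aux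

variable {q : ℝ}

/-- The summand of `zetaQ`. -/
noncomputable def termQ (q : ℝ) (k m : ℕ) : ℝ :=
  q ^ ((k - 1) * (m + 1)) / (qint q (m + 1)) ^ k

lemma zetaQ_eq (q : ℝ) (k : ℕ) : zetaQ q k = ∑' m : ℕ, termQ q k m := rfl

lemma qint_pos (hq0 : 0 < q) (hq1 : q < 1) (m : ℕ) : 0 < qint q (m + 1) := by
  have h1 : q ^ (m + 1) < 1 := pow_lt_one₀ hq0.le hq1 (by omega)
  have : (0:ℝ) < 1 - q := by linarith
  exact div_pos (by linarith) this

lemma qint_one_le (hq0 : 0 < q) (hq1 : q < 1) (m : ℕ) : 1 ≤ qint q (m + 1) := by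
  have h1 : q ^ (m + 1) ≤ q := by
    calc q ^ (m + 1) ≤ q ^ 1 := pow_le_pow_of_le_one hq0.le hq1.le (by omega)
    _ = q := pow_one q
  have : (0:ℝ) < 1 - q := by linarith
  rw [qint, le_div_iff₀ this]
  linarith

lemma termQ_nonneg (hq0 : 0 < q) (hq1 : q < 1) (k m : ℕ) : 0 ≤ termQ q k m :=
  div_nonneg (pow_nonneg hq0.le _) (pow_nonneg (qint_pos hq0 hq1 m).le _)

lemma termQ_le (hq0 : 0 < q) (hq1 : q < 1) (k m : ℕ) (hk : 2 ≤ k) :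
    termQ q k m ≤ q * q ^ m := by
  have hA := qint_pos hq0 hq1 m
  have hA1 := qint_one_le hq0 hq1 m
  have h1 : (1:ℝ) ≤ (qint q (m + 1)) ^ k := one_le_pow₀ hA1
  have h2 : termQ q k m ≤ q ^ ((k - 1) * (m + 1)) := by
    rw [termQ, div_le_iff₀ (by positivity)]
    nlinarith [pow_nonneg hq0.le ((k - 1) * (m + 1))]
  refine h2.trans ?_
  have h3 : q ^ ((k - 1) * (m + 1)) ≤ q ^ (m + 1) := by
    apply pow_le_pow_of_le_one hq0.le hq1.le
    calc m + 1 = 1 * (m + 1) := (one_mul _).symm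
    _ ≤ (k - 1) * (m + 1) := Nat.mul_le_mul_right (m + 1) (by omega)
  calc q ^ ((k - 1) * (m + 1)) ≤ q ^ (m + 1) := h3
  _ = q * q ^ m := by ring

lemma summable_termQ (hq0 : 0 < q) (hq1 : q < 1) (k : ℕ) (hk : 2 ≤ k) :
    Summable (termQ q k) := by
  refine Summable.of_nonneg_of_le (termQ_nonneg hq0 hq1 k) (termQ_le hq0 hq1 k · hk) ?_
  exact (summable_geometric_of_lt_one hq0.le hq1).mul_left q

lemma summable_norm_termQ (hq0 : 0 < q) (hq1 : q < 1) (k : ℕ) (hk : 2 ≤ k) :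
    Summable (fun m => ‖termQ q k m‖) := by
  simpa only [Real.norm_of_nonneg (termQ_nonneg hq0 hq1 k _)] using
    summable_termQ hq0 hq1 k hk

/-- The diagonal identity. -/
lemma diag_identity (hq0 : 0 < q) (hq1 : q < 1) {i j : ℕ} (hi : 2 ≤ i) (hj : 2 ≤ j) (n : ℕ) :
    termQ q i n * termQ q j n = termQ q (i + j) n + (1 - q) * termQ q (i + j - 1) n := by
  set A := qint q (n + 1) with hAdef
  have hA := qint_pos hq0 hq1 n
  have hA0 : A ≠ 0 := ne_of_gt hA
  have hq1' : (1:ℝ) - q ≠ 0 := by intro h; linarith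
  have hA' : (1 - q) * A = 1 - q ^ (n + 1) := by
    rw [hAdef, qint, mul_div_cancel₀ _ hq1']
  obtain ⟨k, hk⟩ : ∃ k, i + j = k + 2 := ⟨i + j - 2, by omega⟩
  have e1 : (i - 1) * (n + 1) + (j - 1) * (n + 1) = k * (n + 1) := by
    rw [← add_mul]; congr 1; omega
  have r1 : k + 2 - 1 = k + 1 := by omega
  have r2 : k + 1 - 1 = k := by omega
  rw [termQ, termQ, termQ, termQ, div_mul_div_comm, ← pow_add, e1, ← pow_add, hk, r1, r2]
  have hq' : q ^ ((k + 1) * (n + 1)) = q ^ (k * (n + 1)) * q ^ (n + 1) := by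
    rw [← pow_add]; congr 1; ring
  rw [hq']
  have h2 : A ^ (k + 2) = A ^ (k + 1) * A := by ring
  have key : (1 - q) * (q ^ (k * (n + 1)) / A ^ (k + 1)) =
      (1 - q ^ (n + 1)) * q ^ (k * (n + 1)) / (A ^ (k + 1) * A) := by
    rw [← hA']; field_simp
  rw [h2, key, ← add_div]
  congr 1; ring

end Aux

theorem stmt_4 (q : ℝ) (hq0 : 0 < q) (hq1 : q < 1) (i j : ℕ) (hi : 2 ≤ i) (hj : 2 ≤ j) :
    zetaQ q i * zetaQ q j =
      zetaQ2 q i j + zetaQ2 q j i + zetaQ q (i + j) + (1 - q) * zetaQ q (i + j - 1) := by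
  have hni : Summable (fun m => ‖termQ q i m‖) := summable_norm_termQ hq0 hq1 i hi
  have hnj : Summable (fun m => ‖termQ q j m‖) := summable_norm_termQ hq0 hq1 j hj
  set F : ℕ × ℕ → ℝ := fun p => termQ q i p.1 * termQ q j p.2 with hFdef
  have hF : Summable F := summable_mul_of_summable_norm hni hnj
  set e₁ : ℕ × ℕ → ℕ × ℕ := fun p => (p.2 + p.1 + 1, p.2) with he₁
  set e₂ : ℕ × ℕ → ℕ × ℕ := fun p => (p.2, p.2 + p.1 + 1) with he₂
  set e₃ : ℕ → ℕ × ℕ := fun n => (n, n) with he₃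
  have inj₁ : Function.Injective e₁ := by
    intro a b h; simp only [he₁, Prod.mk.injEq] at h
    exact Prod.ext (by omega) h.2
  have inj₂ : Function.Injective e₂ := by
    intro a b h; simp only [he₂, Prod.mk.injEq] at h
    exact Prod.ext (by omega) (by omega)
  have inj₃ : Function.Injective e₃ := by
    intro a b h; simp only [he₃, Prod.mk.injEq] at h; exact h.1
  set s₁ : Set (ℕ × ℕ) := {p | p.2 < p.1} with hs₁
  set s₂ : Set (ℕ × ℕ) := {p | p.1 < p.2} with hs₂
  set s₃ : Set (ℕ × ℕ) := {p | p.1 = p.2} with hs₃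
  have rng₁ : Set.range e₁ = s₁ := by
    ext p
    simp only [he₁, hs₁, Set.mem_range, Set.mem_setOf_eq, Prod.ext_iff]
    constructor
    · rintro ⟨a, h1, h2⟩; omega
    · intro h; exact ⟨(p.1 - p.2 - 1, p.2), by omega, rfl⟩
  have rng₂ : Set.range e₂ = s₂ := by
    ext p
    simp only [he₂, hs₂, Set.mem_range, Set.mem_setOf_eq, Prod.ext_iff]
    constructor
    · rintro ⟨a, h1, h2⟩; omega
    · intro h; exact ⟨(p.2 - p.1 - 1, p.1), rfl, by omega⟩
  have rng₃ : Set.range e₃ = s₃ := by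
    ext p
    simp only [he₃, hs₃, Set.mem_range, Set.mem_setOf_eq, Prod.ext_iff]
    constructor
    · rintro ⟨a, h1, h2⟩; omega
    · intro h; exact ⟨p.1, rfl, h⟩
  have hcomp₁ : (s₁.indicator F) ∘ e₁ = F ∘ e₁ := funext fun p =>
    Set.indicator_of_mem (by simp only [he₁, hs₁, Set.mem_setOf_eq]; omega) F
  have hcomp₂ : (s₂.indicator F) ∘ e₂ = F ∘ e₂ := funext fun p =>
    Set.indicator_of_mem (by simp only [he₂, hs₂, Set.mem_setOf_eq]; omega) F
  have hcomp₃ : (s₃.indicator F) ∘ e₃ = F ∘ e₃ := funext fun p =>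
    Set.indicator_of_mem (by simp only [he₃, hs₃, Set.mem_setOf_eq]) F
  have van₁ : ∀ x ∉ Set.range e₁, s₁.indicator F x = 0 := by
    intro x hx; rw [rng₁] at hx; exact Set.indicator_of_notMem hx F
  have van₂ : ∀ x ∉ Set.range e₂, s₂.indicator F x = 0 := by
    intro x hx; rw [rng₂] at hx; exact Set.indicator_of_notMem hx F
  have van₃ : ∀ x ∉ Set.range e₃, s₃.indicator F x = 0 := by
    intro x hx; rw [rng₃] at hx; exact Set.indicator_of_notMem hx F
  have key₁ : ∀ p : ℕ × ℕ, (F ∘ e₁) p =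
      q ^ ((i - 1) * (p.2 + p.1 + 2) + (j - 1) * (p.2 + 1)) /
        ((qint q (p.2 + p.1 + 2)) ^ i * (qint q (p.2 + 1)) ^ j) := by
    intro p
    show termQ q i (p.2 + p.1 + 1) * termQ q j p.2 = _
    rw [termQ, termQ, div_mul_div_comm, ← pow_add]
  have key₂ : ∀ p : ℕ × ℕ, (F ∘ e₂) p =
      q ^ ((j - 1) * (p.2 + p.1 + 2) + (i - 1) * (p.2 + 1)) /
        ((qint q (p.2 + p.1 + 2)) ^ j * (qint q (p.2 + 1)) ^ i) := by
    intro p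
    show termQ q i p.2 * termQ q j (p.2 + p.1 + 1) = _
    rw [termQ, termQ, mul_comm, div_mul_div_comm, ← pow_add]
  have key₃ : ∀ n : ℕ, (F ∘ e₃) n =
      termQ q (i + j) n + (1 - q) * termQ q (i + j - 1) n := by
    intro n
    exact diag_identity hq0 hq1 hi hj n
  have hsum₁ : HasSum (s₁.indicator F) (zetaQ2 q i j) := by
    rw [← Function.Injective.hasSum_iff inj₁ van₁, hcomp₁]
    have S₁ : Summable (F ∘ e₁) := hF.comp_injective inj₁
    have ht : ∑' p, (F ∘ e₁) p = zetaQ2 q i j := tsum_congr key₁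
    exact ht ▸ S₁.hasSum
  have hsum₂ : HasSum (s₂.indicator F) (zetaQ2 q j i) := by
    rw [← Function.Injective.hasSum_iff inj₂ van₂, hcomp₂]
    have S₂ : Summable (F ∘ e₂) := hF.comp_injective inj₂
    have ht : ∑' p, (F ∘ e₂) p = zetaQ2 q j i := tsum_congr key₂
    exact ht ▸ S₂.hasSum
  have hsum₃ : HasSum (s₃.indicator F)
      (zetaQ q (i + j) + (1 - q) * zetaQ q (i + j - 1)) := by
    rw [← Function.Injective.hasSum_iff inj₃ van₃, hcomp₃]
    have h1 : HasSum (termQ q (i + j)) (zetaQ q (i + j)) := by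
      rw [zetaQ_eq]; exact (summable_termQ hq0 hq1 (i + j) (by omega)).hasSum
    have h2 : HasSum (fun n => (1 - q) * termQ q (i + j - 1) n)
        ((1 - q) * zetaQ q (i + j - 1)) := by
      rw [zetaQ_eq]; exact ((summable_termQ hq0 hq1 (i + j - 1) (by omega)).hasSum).mul_left _
    exact (h1.add h2).congr_fun fun n => key₃ n
  have hdecomp : F = s₁.indicator F + s₂.indicator F + s₃.indicator F := by
    funext p
    simp only [Pi.add_apply, Set.indicator_apply, hs₁, hs₂, hs₃, Set.mem_setOf_eq]
    rcases lt_trichotomy p.2 p.1 with h | h | h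
    · rw [if_pos h, if_neg (by omega), if_neg (by omega)]; ring
    · rw [if_neg (by omega), if_neg (by omega), if_pos (by omega)]; ring
    · rw [if_neg (by omega), if_pos h, if_neg (by omega)]; ring
  have htot : HasSum F (zetaQ2 q i j + zetaQ2 q j i +
      (zetaQ q (i + j) + (1 - q) * zetaQ q (i + j - 1))) := by
    rw [hdecomp]
    exact (hsum₁.add hsum₂).add hsum₃
  have hprod : zetaQ q i * zetaQ q j = ∑' p : ℕ × ℕ, F p := by
    rw [zetaQ_eq, zetaQ_eq]
    exact tsum_mul_tsum_of_summable_norm hni hnj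
  rw [hprod, htot.tsum_eq]
  ring
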